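/- Let f be a polynomial over ℂ of degree 5, and for 1 ≤ ρ ≤ 4 let φ_ρ denote the average of f over the multiset of the (5−ρ) roots of the ρ-th derivative f^(ρ) (counted with multiplicity). Then 2·φ₂ − 5·φ₃ + 3·φ₄ = 0. -/

import Mathlib

open Polynomial

/-- The average of `f` over the roots of the `ρ`-th derivative of `f`,
counted with multiplicity. -/
noncomputable def phi (f : Polynomial ℂ) (ρ : ℕ) : ℂ :=
  ((derivative^[ρ] f).roots.map (fun x => f.eval x)).sum / ((f.natDegree - ρ : ℕ) : ℂ)

/-- In any quintic, `2·φ₂ − 5·φ₃ + 3·φ₄ = 0`. -/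
theorem quintic_relation_d (f : Polynomial ℂ) (hf : f.degree = 5) :
    2 * phi f 2 - 5 * phi f 3 + 3 * phi f 4 = 0 := by
  have hsp : ∀ p : ℂ[X], p.Splits := fun p => IsAlgClosed.splits p
  have hnd : f.natDegree = 5 := natDegree_eq_of_degree_eq_some hf
  have hf0 : f ≠ 0 := fun h => by simp [h] at hf
  have ha5 : f.coeff 5 ≠ 0 := by
    have := leadingCoeff_ne_zero.mpr hf0
    rwa [leadingCoeff, hnd] at this
  have hit2 : derivative^[2] f = derivative (derivative f) := rfl
  have hit3 : derivative^[3] f = derivative (derivative (derivative f)) := rfl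
  have hit4 : derivative^[4] f = derivative (derivative (derivative (derivative f))) := rfl
  have hn1 : (derivative f).natDegree = 4 :=
    natDegree_eq_of_degree_eq_some (by rw [degree_derivative_eq f (by rw [hnd]; norm_num), hnd])
  have hn2 : (derivative (derivative f)).natDegree = 3 :=
    natDegree_eq_of_degree_eq_some (by rw [degree_derivative_eq _ (by rw [hn1]; norm_num), hn1])
  have hn3 : (derivative (derivative (derivative f))).natDegree = 2 :=
    natDegree_eq_of_degree_eq_some (by rw [degree_derivative_eq _ (by rw [hn2]; norm_num), hn2])
  have hn4 : (derivative (derivative (derivative (derivative f)))).natDegree = 1 :=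
    natDegree_eq_of_degree_eq_some (by rw [degree_derivative_eq _ (by rw [hn3]; norm_num), hn3])
  have hcard2 : Multiset.card (derivative (derivative f)).roots = 3 := by
    have h := Splits.natDegree_eq_card_roots (hsp (derivative (derivative f)))
    omega
  have hcard3 : Multiset.card (derivative (derivative (derivative f))).roots = 2 := by
    have h := Splits.natDegree_eq_card_roots (hsp (derivative (derivative (derivative f))))
    omega
  have hcard4 : Multiset.card (derivative (derivative (derivative (derivative f)))).roots = 1 := by
    have h := Splits.natDegree_eq_card_roots (hsp (derivative (derivative (derivative (derivative f)))))
    omega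
  obtain ⟨t1, t2, t3, hroots2⟩ := Multiset.card_eq_three.mp hcard2
  obtain ⟨s1, s2, hroots3⟩ := Multiset.card_eq_two.mp hcard3
  obtain ⟨r, hroots4⟩ := Multiset.card_eq_one.mp hcard4
  have hL2 : (derivative (derivative f)).leadingCoeff = 20 * f.coeff 5 := by
    rw [leadingCoeff, hn2]
    simp only [coeff_derivative]
    norm_num; ring
  have hL3 : (derivative (derivative (derivative f))).leadingCoeff = 60 * f.coeff 5 := by
    rw [leadingCoeff, hn3]
    simp only [coeff_derivative]
    norm_num; ring
  have hL4 : (derivative (derivative (derivative (derivative f)))).leadingCoeff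
      = 120 * f.coeff 5 := by
    rw [leadingCoeff, hn4]
    simp only [coeff_derivative]
    norm_num; ring
  have hfac2 : derivative (derivative f) =
      C (20 * f.coeff 5) * X ^ 3 - C (20 * f.coeff 5 * (t1 + t2 + t3)) * X ^ 2
        + C (20 * f.coeff 5 * (t1 * t2 + t1 * t3 + t2 * t3)) * X
        - C (20 * f.coeff 5 * (t1 * t2 * t3)) := by
    have h := Splits.eq_prod_roots (hsp (derivative (derivative f)))
    rw [hroots2, hL2] at h
    rw [h]
    simp only [Multiset.insert_eq_cons, Multiset.map_cons, Multiset.map_singleton,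
      Multiset.prod_cons, Multiset.prod_singleton, map_mul, map_add]
    ring
  have hfac3 : derivative (derivative (derivative f)) =
      C (60 * f.coeff 5) * X ^ 2 - C (60 * f.coeff 5 * (s1 + s2)) * X
        + C (60 * f.coeff 5 * (s1 * s2)) := by
    have h := Splits.eq_prod_roots (hsp (derivative (derivative (derivative f))))
    rw [hroots3, hL3] at h
    rw [h]
    simp only [Multiset.insert_eq_cons, Multiset.map_cons, Multiset.map_singleton,
      Multiset.prod_cons, Multiset.prod_singleton, map_mul, map_add]
    ring
  have hfac4 : derivative (derivative (derivative (derivative f))) =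
      C (120 * f.coeff 5) * X - C (120 * f.coeff 5 * r) := by
    have h := Splits.eq_prod_roots (hsp (derivative (derivative (derivative (derivative f)))))
    rw [hroots4, hL4] at h
    rw [h]
    simp only [Multiset.map_singleton, Multiset.prod_singleton, map_mul]
    ring
  have h4 : 12 * f.coeff 4 = -(20 * f.coeff 5 * (t1 + t2 + t3)) := by
    have h := congrArg (fun p => coeff p 2) hfac2
    simp only [coeff_derivative, coeff_add, coeff_sub, coeff_C_mul, coeff_X_pow, coeff_X,
      coeff_C] at h
    norm_num at h
    linear_combination h
  have h3 : 6 * f.coeff 3 = 20 * f.coeff 5 * (t1 * t2 + t1 * t3 + t2 * t3) := by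
    have h := congrArg (fun p => coeff p 1) hfac2
    simp only [coeff_derivative, coeff_add, coeff_sub, coeff_C_mul, coeff_X_pow, coeff_X,
      coeff_C] at h
    norm_num at h
    linear_combination h
  have h2 : 2 * f.coeff 2 = -(20 * f.coeff 5 * (t1 * t2 * t3)) := by
    have h := congrArg (fun p => coeff p 0) hfac2
    simp only [coeff_derivative, coeff_add, coeff_sub, coeff_C_mul, coeff_X_pow, coeff_X,
      coeff_C] at h
    norm_num at h
    linear_combination h
  have hb1 : 24 * f.coeff 4 = -(60 * f.coeff 5 * (s1 + s2)) := by
    have h := congrArg (fun p => coeff p 1) hfac3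
    simp only [coeff_derivative, coeff_add, coeff_sub, coeff_C_mul, coeff_X_pow, coeff_X,
      coeff_C] at h
    norm_num at h
    linear_combination h
  have hb0 : 6 * f.coeff 3 = 60 * f.coeff 5 * (s1 * s2) := by
    have h := congrArg (fun p => coeff p 0) hfac3
    simp only [coeff_derivative, coeff_add, coeff_sub, coeff_C_mul, coeff_X_pow, coeff_X,
      coeff_C] at h
    norm_num at h
    linear_combination h
  have hc0 : 24 * f.coeff 4 = -(120 * f.coeff 5 * r) := by
    have h := congrArg (fun p => coeff p 0) hfac4
    simp only [coeff_derivative, coeff_add, coeff_sub, coeff_C_mul, coeff_X_pow, coeff_X,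
      coeff_C] at h
    norm_num at h
    linear_combination h
  have hS1 : 3 * (s1 + s2) = 2 * (t1 + t2 + t3) :=
    mul_left_cancel₀ ha5 (by linear_combination ((1:ℂ)/20) * hb1 - ((1:ℂ)/10) * h4)
  have hS2 : 3 * (s1 * s2) = t1 * t2 + t1 * t3 + t2 * t3 :=
    mul_left_cancel₀ ha5 (by linear_combination (-(1:ℂ)/20) * hb0 + ((1:ℂ)/20) * h3)
  have hr : 3 * r = t1 + t2 + t3 :=
    mul_left_cancel₀ ha5 (by linear_combination ((1:ℂ)/40) * hc0 - ((1:ℂ)/20) * h4)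
  have hev : ∀ x : ℂ, f.eval x = f.coeff 0 + f.coeff 1 * x + f.coeff 2 * x ^ 2
      + f.coeff 3 * x ^ 3 + f.coeff 4 * x ^ 4 + f.coeff 5 * x ^ 5 := by
    intro x
    rw [eval_eq_sum_range, hnd]
    simp [Finset.sum_range_succ]
  have d2 : ((5 - 2 : ℕ) : ℂ) = 3 := by norm_num
  have d3 : ((5 - 3 : ℕ) : ℂ) = 2 := by norm_num
  have d4 : ((5 - 4 : ℕ) : ℂ) = 1 := by norm_num
  simp only [phi, hit2, hit3, hit4, hroots2, hroots3, hroots4, hnd, d2, d3, d4,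
    Multiset.insert_eq_cons, Multiset.map_cons, Multiset.map_singleton, Multiset.sum_cons,
    Multiset.sum_singleton, hev]
  linear_combination (((1:ℂ)/18)*t3^4 + ((1:ℂ)/18)*t2^4 + ((1:ℂ)/18)*t1^4 + ((-5:ℂ)/24)*s2^4 + ((-5:ℂ)/24)*s1^4 + ((1:ℂ)/4)*r^4) * h4 + (((1:ℂ)/9)*t3^3 + ((1:ℂ)/9)*t2^3 + ((1:ℂ)/9)*t1^3 + ((-5:ℂ)/12)*s2^3 + ((-5:ℂ)/12)*s1^3 + ((1:ℂ)/2)*r^3) * h3 + (((1:ℂ)/3)*t3^2 + ((1:ℂ)/3)*t2^2 + ((1:ℂ)/3)*t1^2 + ((-5:ℂ)/4)*s2^2 + ((-5:ℂ)/4)*s1^2 + ((3:ℂ)/2)*r^2) * h2 + ((f.coeff 1) + ((-4:ℂ)/81)*t3^4*(f.coeff 5) + ((14:ℂ)/81)*t2*t3^3*(f.coeff 5) + ((4:ℂ)/9)*t2^2*t3^2*(f.coeff 5) + ((14:ℂ)/81)*t2^3*t3*(f.coeff 5) + ((-4:ℂ)/81)*t2^4*(f.coeff 5) + ((14:ℂ)/81)*t1*t3^3*(f.coeff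 5) + ((-56:ℂ)/27)*t1*t2*t3^2*(f.coeff 5) + ((-56:ℂ)/27)*t1*t2^2*t3*(f.coeff 5) + ((14:ℂ)/81)*t1*t2^3*(f.coeff 5) + ((4:ℂ)/9)*t1^2*t3^2*(f.coeff 5) + ((-56:ℂ)/27)*t1^2*t2*t3*(f.coeff 5) + ((4:ℂ)/9)*t1^2*t2^2*(f.coeff 5) + ((14:ℂ)/81)*t1^3*t3*(f.coeff 5) + ((14:ℂ)/81)*t1^3*t2*(f.coeff 5) + ((-4:ℂ)/81)*t1^4*(f.coeff 5) + ((-4:ℂ)/27)*r*t3^3*(f.coeff 5) + ((2:ℂ)/3)*r*t2*t3^2*(f.coeff 5) + ((2:ℂ)/3)*r*t2^2*t3*(f.coeff 5) + ((-4:ℂ)/27)*r*t2^3*(f.coeff 5) + ((2:ℂ)/3)*r*t1*t3^2*(f.coeff 5) + ((-68:ℂ)/9)*r*t1*t2*t3*(f.coeff 5) + ((2:ℂ)/3)*r*t1*t2^2*(f.coeff 5) + ((2:ℂ)/3)*r*t1^2*t3*(f.coeff 5) + ((2:ℂ)/3)*r*t1^2*t2*(f.coeff 5) + ((-4:ℂ)/27)*r*t1^3*(f.coeff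 5) + ((-4:ℂ)/9)*r^2*t3^2*(f.coeff 5) + ((22:ℂ)/9)*r^2*t2*t3*(f.coeff 5) + ((-4:ℂ)/9)*r^2*t2^2*(f.coeff 5) + ((22:ℂ)/9)*r^2*t1*t3*(f.coeff 5) + ((22:ℂ)/9)*r^2*t1*t2*(f.coeff 5) + ((-4:ℂ)/9)*r^2*t1^2*(f.coeff 5) + ((-4:ℂ)/3)*r^3*t3*(f.coeff 5) + ((-4:ℂ)/3)*r^3*t2*(f.coeff 5) + ((-4:ℂ)/3)*r^3*t1*(f.coeff 5) + r^4*(f.coeff 5)) * hr + (((-5:ℂ)/6)*(f.coeff 1) + ((20:ℂ)/81)*t3^4*(f.coeff 5) + ((-20:ℂ)/81)*t2*t3^3*(f.coeff 5) + ((-80:ℂ)/81)*t2^2*t3^2*(f.coeff 5) + ((-20:ℂ)/81)*t2^3*t3*(f.coeff 5) + ((20:ℂ)/81)*t2^4*(f.coeff 5) + ((-20:ℂ)/81)*t1*t3^3*(f.coeff 5) + ((190:ℂ)/81)*t1*t2*t3^2*(f.coeff 5) + ((190:ℂ)/81)*t1*t2^2*t3*(f.coeff 5) + ((-20:ℂ)/81)*t1*t2^3*(f.coeff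 5) + ((-80:ℂ)/81)*t1^2*t3^2*(f.coeff 5) + ((190:ℂ)/81)*t1^2*t2*t3*(f.coeff 5) + ((-80:ℂ)/81)*t1^2*t2^2*(f.coeff 5) + ((-20:ℂ)/81)*t1^3*t3*(f.coeff 5) + ((-20:ℂ)/81)*t1^3*t2*(f.coeff 5) + ((20:ℂ)/81)*t1^4*(f.coeff 5) + ((10:ℂ)/27)*s2*t3^3*(f.coeff 5) + ((-20:ℂ)/27)*s2*t2*t3^2*(f.coeff 5) + ((-20:ℂ)/27)*s2*t2^2*t3*(f.coeff 5) + ((10:ℂ)/27)*s2*t2^3*(f.coeff 5) + ((-20:ℂ)/27)*s2*t1*t3^2*(f.coeff 5) + (5:ℂ)*s2*t1*t2*t3*(f.coeff 5) + ((-20:ℂ)/27)*s2*t1*t2^2*(f.coeff 5) + ((-20:ℂ)/27)*s2*t1^2*t3*(f.coeff 5) + ((-20:ℂ)/27)*s2*t1^2*t2*(f.coeff 5) + ((10:ℂ)/27)*s2*t1^3*(f.coeff 5) + ((5:ℂ)/9)*s2^2*t3^2*(f.coeff 5) + ((-5:ℂ)/3)*s2^2*t2*t3*(f.coeff 5) +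 ((5:ℂ)/9)*s2^2*t2^2*(f.coeff 5) + ((-5:ℂ)/3)*s2^2*t1*t3*(f.coeff 5) + ((-5:ℂ)/3)*s2^2*t1*t2*(f.coeff 5) + ((5:ℂ)/9)*s2^2*t1^2*(f.coeff 5) + ((5:ℂ)/6)*s2^3*t3*(f.coeff 5) + ((5:ℂ)/6)*s2^3*t2*(f.coeff 5) + ((5:ℂ)/6)*s2^3*t1*(f.coeff 5) + ((-5:ℂ)/6)*s2^4*(f.coeff 5) + ((10:ℂ)/27)*s1*t3^3*(f.coeff 5) + ((-20:ℂ)/27)*s1*t2*t3^2*(f.coeff 5) + ((-20:ℂ)/27)*s1*t2^2*t3*(f.coeff 5) + ((10:ℂ)/27)*s1*t2^3*(f.coeff 5) + ((-20:ℂ)/27)*s1*t1*t3^2*(f.coeff 5) + (5:ℂ)*s1*t1*t2*t3*(f.coeff 5) + ((-20:ℂ)/27)*s1*t1*t2^2*(f.coeff 5) + ((-20:ℂ)/27)*s1*t1^2*t3*(f.coeff 5) + ((-20:ℂ)/27)*s1*t1^2*t2*(f.coeff 5) + ((10:ℂ)/27)*s1*t1^3*(f.coeff 5) + ((-20:ℂ)/27)*s1*s2*t3^2*(f.coeff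 5) + ((35:ℂ)/27)*s1*s2*t2*t3*(f.coeff 5) + ((-20:ℂ)/27)*s1*s2*t2^2*(f.coeff 5) + ((35:ℂ)/27)*s1*s2*t1*t3*(f.coeff 5) + ((35:ℂ)/27)*s1*s2*t1*t2*(f.coeff 5) + ((-20:ℂ)/27)*s1*s2*t1^2*(f.coeff 5) + ((-5:ℂ)/18)*s1*s2^2*t3*(f.coeff 5) + ((-5:ℂ)/18)*s1*s2^2*t2*(f.coeff 5) + ((-5:ℂ)/18)*s1*s2^2*t1*(f.coeff 5) + ((5:ℂ)/6)*s1*s2^3*(f.coeff 5) + ((5:ℂ)/9)*s1^2*t3^2*(f.coeff 5) + ((-5:ℂ)/3)*s1^2*t2*t3*(f.coeff 5) + ((5:ℂ)/9)*s1^2*t2^2*(f.coeff 5) + ((-5:ℂ)/3)*s1^2*t1*t3*(f.coeff 5) + ((-5:ℂ)/3)*s1^2*t1*t2*(f.coeff 5) + ((5:ℂ)/9)*s1^2*t1^2*(f.coeff 5) + ((-5:ℂ)/18)*s1^2*s2*t3*(f.coeff 5) + ((-5:ℂ)/18)*s1^2*s2*t2*(f.coeff 5) + ((-5:ℂ)/18)*s1^2*s2*t1*(f.coeff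 5) + ((-5:ℂ)/6)*s1^2*s2^2*(f.coeff 5) + ((5:ℂ)/6)*s1^3*t3*(f.coeff 5) + ((5:ℂ)/6)*s1^3*t2*(f.coeff 5) + ((5:ℂ)/6)*s1^3*t1*(f.coeff 5) + ((5:ℂ)/6)*s1^3*s2*(f.coeff 5) + ((-5:ℂ)/6)*s1^4*(f.coeff 5)) * hS1 + (((-100:ℂ)/81)*t3^3*(f.coeff 5) + ((50:ℂ)/27)*t2*t3^2*(f.coeff 5) + ((50:ℂ)/27)*t2^2*t3*(f.coeff 5) + ((-100:ℂ)/81)*t2^3*(f.coeff 5) + ((50:ℂ)/27)*t1*t3^2*(f.coeff 5) + ((-200:ℂ)/27)*t1*t2*t3*(f.coeff 5) + ((50:ℂ)/27)*t1*t2^2*(f.coeff 5) + ((50:ℂ)/27)*t1^2*t3*(f.coeff 5) + ((50:ℂ)/27)*t1^2*t2*(f.coeff 5) + ((-100:ℂ)/81)*t1^3*(f.coeff 5)) * hS2
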